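/- Let f : ℝⁿ → ℝⁿ be piecewise affine with pieces (f_i, C_i), i = 1,…,N, and suppose f is a bijection of ℝⁿ onto ℝⁿ. Then the inverse map f⁻¹ : ℝⁿ → ℝⁿ is also piecewise affine: there exist affine maps g_1,…,g_M : ℝⁿ → ℝⁿ and closed convex polyhedra D_1,…,D_M with nonempty interiors, covering ℝⁿ, with pairwise disjoint interiors, such that f⁻¹ agrees with g_j on D_j for each j. -/

import Mathlib

/-- `Eu n` is the Euclidean space `ℝⁿ`. -/
noncomputable abbrev Eu (n : ℕ) := EuclideanSpace ℝ (Fin n)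

/-- A closed convex polyhedron in `ℝⁿ`: a finite intersection of closed half-spaces. -/
def IsPolyhedron {n : ℕ} (C : Set (Eu n)) : Prop :=
  ∃ (m : ℕ) (l : Fin m → (Eu n →ₗ[ℝ] ℝ)) (c : Fin m → ℝ),
    C = {x | ∀ i, l i x ≤ c i}

/-- `f : ℝⁿ → ℝⁿ` is piecewise affine with pieces `(F i, C i)`, `i : Fin N`:
each `F i` is an affine map, each `C i` is a closed convex polyhedron with nonempty
interior, the `C i` cover `ℝⁿ`, their interiors are pairwise disjoint, and `f`
agrees with `F i` on `C i`. -/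
def IsPiecewiseAffine {n N : ℕ} (f : Eu n → Eu n)
    (F : Fin N → (Eu n →ᵃ[ℝ] Eu n)) (C : Fin N → Set (Eu n)) : Prop :=
  (∀ i, IsPolyhedron (C i)) ∧
  (∀ i, (interior (C i)).Nonempty) ∧
  (⋃ i, C i) = Set.univ ∧
  (∀ i j, i ≠ j → interior (C i) ∩ interior (C j) = ∅) ∧
  (∀ i, ∀ x ∈ C i, f x = F i x)

lemma affine_decomp {n : ℕ} (G : Eu n →ᵃ[ℝ] Eu n) (y : Eu n) :
    G y = G.linear y + G 0 := by
  conv_lhs => rw [show y = y +ᵥ (0 : Eu n) by simp, AffineMap.map_vadd]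
  rfl

lemma isPolyhedron_preimage {n : ℕ} (G : Eu n →ᵃ[ℝ] Eu n) {C : Set (Eu n)}
    (h : IsPolyhedron C) : IsPolyhedron (G ⁻¹' C) := by
  obtain ⟨m, l, c, rfl⟩ := h
  refine ⟨m, fun i => (l i).comp G.linear, fun i => c i - l i (G 0), ?_⟩
  ext y
  simp only [Set.mem_preimage, Set.mem_setOf_eq, LinearMap.comp_apply]
  constructor
  · intro h i
    have := h i
    rw [affine_decomp G y, map_add] at this
    linarith
  · intro h i
    have := h i
    rw [affine_decomp G y, map_add]
    linarith

lemma exists_affine_inverse {n : ℕ} (F : Eu n →ᵃ[ℝ] Eu n)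
    (hinj : Function.Injective F.linear) :
    ∃ G : Eu n →ᵃ[ℝ] Eu n, (∀ x, G (F x) = x) ∧ (∀ y, F (G y) = y) := by
  have hsurj := LinearMap.injective_iff_surjective.mp hinj
  let e := LinearEquiv.ofBijective F.linear ⟨hinj, hsurj⟩
  have he : ∀ x, e x = F.linear x := fun x => rfl
  have hFl : ∀ x, F x = F.linear x + F 0 := fun x => affine_decomp F x
  refine ⟨{ toFun := fun y => e.symm (y - F 0),
            linear := e.symm.toLinearMap,
            map_vadd' := ?_ }, ?_, ?_⟩
  · intro p v
    simp only [vadd_eq_add, add_sub_assoc, map_add]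
    rfl
  · intro x
    show e.symm (F x - F 0) = x
    rw [hFl x]
    simp only [add_sub_cancel_right]
    rw [← he x, e.symm_apply_apply]
  · intro y
    show F (e.symm (y - F 0)) = y
    rw [hFl (e.symm (y - F 0)), ← he _, e.apply_symm_apply]
    abel

/-- The inverse of a bijective piecewise affine map
`f : ℝⁿ → ℝⁿ` is itself piecewise affine. -/
theorem piecewise_affine_inverse_piecewise_affine
    {n N : ℕ} (f : Eu n → Eu n) (F : Fin N → (Eu n →ᵃ[ℝ] Eu n))
    (C : Fin N → Set (Eu n)) (hpa : IsPiecewiseAffine f F C)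
    (hbij : Function.Bijective f)
    (g : Eu n → Eu n) (hg₁ : Function.LeftInverse g f)
    (hg₂ : Function.RightInverse g f) :
    ∃ (M : ℕ) (G : Fin M → (Eu n →ᵃ[ℝ] Eu n)) (D : Fin M → Set (Eu n)),
      IsPiecewiseAffine g G D := by
  obtain ⟨hpoly, hint, hcover, hdisj, hagree⟩ := hpa
  -- linear parts are injective
  have hinj : ∀ i, Function.Injective (F i).linear := by
    intro i
    rw [injective_iff_map_eq_zero]
    intro v hv
    by_contra hv0
    obtain ⟨x, hx⟩ := hint i
    obtain ⟨ε, hε, hball⟩ := Metric.isOpen_iff.mp isOpen_interior x hx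
    set t : ℝ := ε / (2 * ‖v‖) with ht
    have hvn : 0 < ‖v‖ := norm_pos_iff.mpr hv0
    have htpos : 0 < t := by positivity
    have hmem : x + t • v ∈ C i := by
      apply interior_subset
      apply hball
      simp only [Metric.mem_ball, dist_eq_norm, add_sub_cancel_left, norm_smul,
        Real.norm_eq_abs, abs_of_pos htpos]
      have htv : t * ‖v‖ = ε / 2 := by
        rw [ht]; field_simp
      have hvt : ‖v‖ * t = ε / 2 := by rw [mul_comm]; exact htv
      rw [ht] at htv hvt ⊢
      linarith
    have hfe : f (x + t • v) = f x := by
      rw [hagree i _ hmem, hagree i x (interior_subset hx)]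
      have : F i (t • v +ᵥ x) = (F i).linear (t • v) +ᵥ F i x := AffineMap.map_vadd _ _ _
      rw [show x + t • v = t • v +ᵥ x by simp [vadd_eq_add, add_comm], this]
      simp [map_smul, hv]
    have := hbij.1 hfe
    have : t • v = 0 := by
      have h2 : x + t • v = x + 0 := by simpa using this
      exact add_left_cancel h2
    rcases smul_eq_zero.mp this with h | h
    · exact absurd h (ne_of_gt htpos)
    · exact hv0 h
  choose G hGF hFG using fun i => exists_affine_inverse (F i) (hinj i)
  refine ⟨N, G, fun i => G i ⁻¹' C i, ?_, ?_, ?_, ?_, ?_⟩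
  · intro i; exact isPolyhedron_preimage (G i) (hpoly i)
  · -- nonempty interior
    intro i
    obtain ⟨x, hx⟩ := hint i
    refine ⟨F i x, ?_⟩
    have hopen : IsOpen (G i ⁻¹' interior (C i)) :=
      isOpen_interior.preimage (G i).continuous_of_finiteDimensional
    have hsub : G i ⁻¹' interior (C i) ⊆ G i ⁻¹' C i :=
      Set.preimage_mono interior_subset
    apply interior_maximal hsub hopen
    simp only [Set.mem_preimage, hGF i x]
    exact hx
  · -- cover
    apply Set.eq_univ_of_forall
    intro y
    obtain ⟨x, hx⟩ := hbij.2 y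
    have : x ∈ ⋃ i, C i := hcover ▸ Set.mem_univ x
    obtain ⟨_, ⟨i, rfl⟩, hxi⟩ := this
    refine Set.mem_iUnion.mpr ⟨i, ?_⟩
    simp only [Set.mem_preimage]
    have : y = F i x := by rw [← hx, hagree i x hxi]
    rw [this, hGF i x]
    exact hxi
  · -- disjoint interiors
    intro i j hij
    by_contra h
    obtain ⟨y, hyi, hyj⟩ := Set.nonempty_iff_ne_empty.mpr h
    have key : ∀ k, y ∈ interior (G k ⁻¹' C k) → G k y ∈ interior (C k) := by
      intro k hy
      have hopen : IsOpen (F k ⁻¹' interior (G k ⁻¹' C k)) :=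
        isOpen_interior.preimage (F k).continuous_of_finiteDimensional
      have hsub : F k ⁻¹' interior (G k ⁻¹' C k) ⊆ C k := by
        intro z hz
        have : F k z ∈ G k ⁻¹' C k := interior_subset hz
        simpa [Set.mem_preimage, hGF k z] using this
      have : F k ⁻¹' interior (G k ⁻¹' C k) ⊆ interior (C k) :=
        interior_maximal hsub hopen
      apply this
      simp only [Set.mem_preimage, hFG k y]
      exact hy
    have hGi := key i hyi
    have hGj := key j hyj
    have heq : G i y = G j y := by
      apply hbij.1
      rw [hagree i _ (interior_subset hGi), hagree j _ (interior_subset hGj),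
        hFG i y, hFG j y]
    have : G i y ∈ interior (C i) ∩ interior (C j) := ⟨hGi, heq ▸ hGj⟩
    rw [hdisj i j hij] at this
    exact this
  · -- agreement
    intro i y hy
    simp only [Set.mem_preimage] at hy
    have h0 : f (G i y) = y := by rw [hagree i _ hy, hFG i y]
    have h1 : g y = g (f (G i y)) := by rw [h0]
    rw [h1, hg₁]
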